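/- Let G be a 2-edge-connected, non-regular finite graph (multiple edges allowed, no loops), let F be a weak 2-factor of G, let w ∈ V(G) and λ ∈ {0,1}. Let T be a good weakly even (w,λ)-tree in G of maximum order, with (w,λ)-bipartition (X₀,Y₀), and suppose V(T) ≠ V(G). Suppose y₀z is an edge of G with y₀ ∈ Y₀ and z ∉ V(T). Then the component C of F containing z is an even cycle; moreover, if (X,Y) is the bipartition of C in which z ∈ X, then every vertex of Y has degree Δ(G) in G and Y is an independent set in G. -/

import Mathlib

/-- A multigraph on vertex type `V` with edge type `E`: each edge is assigned an
unordered pair of distinct endpoints (multiple edges allowed, no loops). -/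
structure Multigraph (V : Type) (E : Type) where
  inc : E → Sym2 V
  loopless : ∀ e : E, ¬ (inc e).IsDiag

namespace Multigraph

variable {V E : Type}

/-- `u` and `v` are joined by an edge belonging to the edge set `S`. -/
def AdjOn (G : Multigraph V E) (S : Set E) (u v : V) : Prop :=
  ∃ e ∈ S, G.inc e = s(u, v)

/-- `v` is reachable from `u` using edges in `S`. -/
def ReachOn (G : Multigraph V E) (S : Set E) (u v : V) : Prop :=
  Relation.ReflTransGen (G.AdjOn S) u v

/-- `G` is connected. -/
def Connected (G : Multigraph V E) : Prop :=
  Nonempty V ∧ ∀ u v : V, G.ReachOn Set.univ u v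

/-- The degree of `v` in the spanning subgraph with edge set `S`. -/
noncomputable def degOn (G : Multigraph V E) (S : Set E) (v : V) : ℕ :=
  {e ∈ S | v ∈ G.inc e}.ncard

/-- The degree of `v` in `G`. -/
noncomputable def degree (G : Multigraph V E) (v : V) : ℕ :=
  G.degOn Set.univ v

/-- The maximum degree `Δ(G)`. -/
noncomputable def maxDegree (G : Multigraph V E) [Fintype V] : ℕ :=
  Finset.univ.sup G.degree

/-- `G` is regular. -/
def IsRegular (G : Multigraph V E) : Prop :=
  ∃ r : ℕ, ∀ v : V, G.degree v = r

/-- The 2-colouring `c` is proper on the edge set `S`: the two endpoints of any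
edge of `S` receive different colours. -/
def ProperOn (G : Multigraph V E) (S : Set E) (c : V → Bool) : Prop :=
  ∀ e ∈ S, ∀ u v : V, G.inc e = s(u, v) → c u ≠ c v

/-- `G` is bipartite. -/
def IsBipartite (G : Multigraph V E) : Prop :=
  ∃ c : V → Bool, G.ProperOn Set.univ c

/-- The sub-multigraph of `G` with vertex set `U` and edge set `S` is a tree:
`U` is nonempty, every edge of `S` joins vertices of `U`, any two vertices of `U`
are joined by a walk using edges of `S`, and there are exactly `|U| - 1` edges
(which forces acyclicity, and in particular forbids parallel edges in `S`). -/
structure IsTree (G : Multigraph V E) (U : Set V) (S : Set E) : Prop where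
  nonempty : U.Nonempty
  edges_in : ∀ e ∈ S, ∀ v : V, v ∈ G.inc e → v ∈ U
  conn : ∀ u ∈ U, ∀ v ∈ U, G.ReachOn S u v
  card_eq : S.ncard + 1 = U.ncard

/-- `v` is a leaf of the subgraph with edge set `S`. -/
def IsLeaf (G : Multigraph V E) (S : Set E) (v : V) : Prop :=
  G.degOn S v = 1

/-- `e` is a cutedge: after removing `e`, some pair of vertices is separated. -/
def IsCutedge (G : Multigraph V E) (e : E) : Prop :=
  ∃ u v : V, ¬ G.ReachOn {e}ᶜ u v

/-- `G` is 2-edge-connected: connected and without cutedges. -/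
def TwoEdgeConnected (G : Multigraph V E) : Prop :=
  G.Connected ∧ ∀ e : E, ¬ G.IsCutedge e

/-- The edge set `S` is a weak 2-factor of `G`: every vertex has degree at most
2 in `S` (equivalently, every component of the spanning subgraph is a path —
possibly a single vertex — or a cycle), and every vertex of degree less than 2
in `S` (i.e. every endvertex of a path component) has degree less than `Δ(G)`
in `G`. -/
def IsWeakTwoFactor (G : Multigraph V E) [Fintype V] (S : Set E) : Prop :=
  ∀ v : V, G.degOn S v ≤ 2 ∧ (G.degOn S v < 2 → G.degree v < G.maxDegree)

-- ===== helpers =====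

variable {G : Multigraph V E}

lemma sym2_rep (z : Sym2 V) : ∃ a b : V, z = s(a, b) :=
  Sym2.ind (fun a b => ⟨a, b, rfl⟩) z

lemma inc_ne {e : E} {a b : V} (h : G.inc e = s(a, b)) : a ≠ b := by
  intro hab
  exact G.loopless e (by rw [h, hab]; exact Sym2.mk_isDiag_iff.mpr rfl)

lemma sym2_eq_of_mem {z : Sym2 V} {a b : V} (ha : a ∈ z) (hb : b ∈ z) (hab : a ≠ b) :
    z = s(a, b) := by
  obtain ⟨p, q, rfl⟩ := sym2_rep z
  rw [Sym2.mem_iff] at ha hb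
  rcases ha with rfl | rfl <;> rcases hb with rfl | rfl
  · exact absurd rfl hab
  · rfl
  · exact Sym2.eq_swap
  · exact absurd rfl hab

lemma AdjOn.symm {S : Set E} {u v : V} (h : G.AdjOn S u v) : G.AdjOn S v u := by
  obtain ⟨e, he, h2⟩ := h; exact ⟨e, he, h2.trans Sym2.eq_swap⟩

lemma ReachOn.symm {S : Set E} {u v : V} (h : G.ReachOn S u v) : G.ReachOn S v u :=
  by
    unfold ReachOn at h ⊢
    induction h with
    | refl => exact Relation.ReflTransGen.refl
    | tail _ hstep ih => exact Relation.ReflTransGen.head (AdjOn.symm hstep) ih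

lemma ReachOn.trans {S : Set E} {u v x : V} (h : G.ReachOn S u v) (h2 : G.ReachOn S v x) :
    G.ReachOn S u x := Relation.ReflTransGen.trans h h2

lemma ReachOn.refl {S : Set E} {u : V} : G.ReachOn S u u := Relation.ReflTransGen.refl

lemma AdjOn.reachOn {S : Set E} {u v : V} (h : G.AdjOn S u v) : G.ReachOn S u v :=
  Relation.ReflTransGen.single h

lemma ReachOn.mono {S S' : Set E} (hSS : S ⊆ S') {u v : V} (h : G.ReachOn S u v) :
    G.ReachOn S' u v :=
  Relation.ReflTransGen.mono (r := G.AdjOn S) (p := G.AdjOn S')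
    (by intro a b hab; obtain ⟨e, he, h2⟩ := hab; exact ⟨e, hSS he, h2⟩) _ _ h


section Deg
variable [Fintype V] [Fintype E]

lemma degOn_mono {S S' : Set E} (h : S ⊆ S') (v : V) : G.degOn S v ≤ G.degOn S' v := by
  apply Set.ncard_le_ncard _ (Set.toFinite _)
  intro e ⟨he, hv⟩; exact ⟨h he, hv⟩

lemma degOn_union {S S' : Set E} (h : Disjoint S S') (v : V) :
    G.degOn (S ∪ S') v = G.degOn S v + G.degOn S' v := by
  unfold degOn
  rw [show {e ∈ S ∪ S' | v ∈ G.inc e} = {e ∈ S | v ∈ G.inc e} ∪ {e ∈ S' | v ∈ G.inc e} by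
    ext e; simp [Set.mem_union, or_and_right]]
  exact Set.ncard_union_eq (h.mono (fun e ⟨he, _⟩ => he) (fun e ⟨he, _⟩ => he))
    (Set.toFinite _) (Set.toFinite _)

open Classical in
lemma degOn_singleton (e : E) (v : V) :
    G.degOn {e} v = if v ∈ G.inc e then 1 else 0 := by
  classical
  unfold degOn
  split
  · rw [show {e' ∈ ({e} : Set E) | v ∈ G.inc e'} = {e} by
      ext e'; simp_all (config := {contextual := true})]
    simp
  · rw [show {e' ∈ ({e} : Set E) | v ∈ G.inc e'} = ∅ by
      ext e'; simp_all (config := {contextual := true})]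
    simp

lemma degOn_sdiff_add (S T : Set E) (v : V) :
    G.degOn (S \ T) v + G.degOn (S ∩ T) v = G.degOn S v := by
  rw [← degOn_union (by rw [Set.disjoint_left]; exact fun e he1 he2 => he1.2 he2.2) v,
    Set.diff_union_inter]

lemma exists_edge_of_degOn_pos {S : Set E} {v : V} (h : 0 < G.degOn S v) :
    ∃ e ∈ S, v ∈ G.inc e := by
  obtain ⟨e, he, hv⟩ := (Set.ncard_pos (Set.toFinite _)).mp h
  exact ⟨e, he, hv⟩

lemma degOn_pos_of_edge {S : Set E} {v : V} {e : E} (he : e ∈ S) (hv : v ∈ G.inc e) :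
    0 < G.degOn S v := by
  apply (Set.ncard_pos (Set.toFinite _)).mpr
  exact ⟨e, he, hv⟩

lemma degree_le_maxDegree (v : V) : G.degree v ≤ G.maxDegree :=
  Finset.le_sup (Finset.mem_univ v)

open Finset in
lemma handshake (A : Set V) (S : Set E)
    (hin : ∀ e ∈ S, ∀ v : V, v ∈ G.inc e → v ∈ A) :
    ∑ v ∈ A.toFinite.toFinset, G.degOn S v = 2 * S.ncard := by
  classical
  have hdeg : ∀ v : V, G.degOn S v = (S.toFinite.toFinset.filter (fun e => v ∈ G.inc e)).card := by
    intro v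
    rw [degOn, ← Set.ncard_coe_finset]
    congr 1
    ext e
    simp [Set.Finite.mem_toFinset, Set.mem_setOf_eq]
  calc ∑ v ∈ A.toFinite.toFinset, G.degOn S v
      = ∑ v ∈ A.toFinite.toFinset, ∑ e ∈ S.toFinite.toFinset, (if v ∈ G.inc e then 1 else 0) := by
        refine Finset.sum_congr rfl (fun v _ => ?_)
        rw [hdeg v, Finset.card_filter]
    _ = ∑ e ∈ S.toFinite.toFinset, ∑ v ∈ A.toFinite.toFinset, (if v ∈ G.inc e then 1 else 0) :=
        Finset.sum_comm
    _ = ∑ e ∈ S.toFinite.toFinset, 2 := by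
        refine Finset.sum_congr rfl (fun e he => ?_)
        rw [← Finset.card_filter]
        obtain ⟨a, b, hab⟩ := sym2_rep (G.inc e)
        have hne : a ≠ b := inc_ne hab
        have heS : e ∈ S := by simpa using he
        have : A.toFinite.toFinset.filter (fun v => v ∈ G.inc e) = {a, b} := by
          ext v
          simp only [Finset.mem_filter, Set.Finite.mem_toFinset, Finset.mem_insert,
            Finset.mem_singleton, hab, Sym2.mem_iff]
          constructor
          · rintro ⟨_, h⟩; exact h
          · intro h
            have hv : v ∈ G.inc e := by rw [hab, Sym2.mem_iff]; exact h
            exact ⟨hin e heS v hv, h⟩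
        rw [this, Finset.card_insert_of_notMem (by simpa using hne), Finset.card_singleton]
    _ = 2 * S.ncard := by
        rw [Finset.sum_const, smul_eq_mul, ← Set.ncard_coe_finset, Set.Finite.coe_toFinset]
        ring
        
end Deg


section Reach

lemma reach_empty {u v : V} (h : G.ReachOn ∅ u v) : u = v := by
  induction h with
  | refl => rfl
  | tail _ hstep ih => obtain ⟨e, he, _⟩ := hstep; exact absurd he (Set.notMem_empty e)

/-- Splitting reachability at a removed edge. -/
lemma reach_from_endpoint {S : Set E} {e₀ : E} {x y : V} (h₀ : G.inc e₀ = s(x, y))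
    {v : V} (h : G.ReachOn S x v) :
    G.ReachOn (S \ {e₀}) x v ∨ G.ReachOn (S \ {e₀}) y v := by
  induction h with
  | refl => exact Or.inl ReachOn.refl
  | tail _ hstep ih =>
    obtain ⟨e, heS, hinc⟩ := hstep
    rename_i b c _
    by_cases he : e = e₀
    · subst he
      rw [h₀] at hinc
      rcases Sym2.eq_iff.mp hinc.symm with ⟨rfl, rfl⟩ | ⟨rfl, rfl⟩
      · exact Or.inr ReachOn.refl
      · exact Or.inl ReachOn.refl
    · have hadj : G.AdjOn (S \ {e₀}) b c := ⟨e, ⟨heS, he⟩, hinc⟩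
      rcases ih with h1 | h1
      · exact Or.inl (h1.trans hadj.reachOn)
      · exact Or.inr (h1.trans hadj.reachOn)

lemma reach_remove_of_bypass {S : Set E} {e₀ : E} {x y : V} (h₀ : G.inc e₀ = s(x, y))
    (hxy : G.ReachOn (S \ {e₀}) x y) {u v : V} (h : G.ReachOn S u v) :
    G.ReachOn (S \ {e₀}) u v := by
  induction h with
  | refl => exact ReachOn.refl
  | tail _ hstep ih =>
    obtain ⟨e, heS, hinc⟩ := hstep
    rename_i b c _
    by_cases he : e = e₀
    · subst he
      rw [h₀] at hinc
      rcases Sym2.eq_iff.mp hinc.symm with ⟨rfl, rfl⟩ | ⟨rfl, rfl⟩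
      · exact ih.trans hxy
      · exact ih.trans hxy.symm
    · exact ih.trans (AdjOn.reachOn ⟨e, ⟨heS, he⟩, hinc⟩)

/-- Restricting a walk to the edges touching a closed set of vertices. -/
lemma reach_restrict {S : Set E} {A : Set V}
    (hcl : ∀ e ∈ S, (∃ a ∈ G.inc e, a ∈ A) → ∀ b ∈ G.inc e, b ∈ A)
    {u v : V} (h : G.ReachOn S u v) (hu : u ∈ A) :
    G.ReachOn {e | e ∈ S ∧ ∃ a ∈ G.inc e, a ∈ A} u v ∧ v ∈ A := by
  induction h with
  | refl => exact ⟨ReachOn.refl, hu⟩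
  | tail _ hstep ih =>
    obtain ⟨e, heS, hinc⟩ := hstep
    rename_i b c _
    have hb : b ∈ G.inc e := by rw [hinc]; simp
    have hc : c ∈ G.inc e := by rw [hinc]; simp
    have he' : e ∈ {e | e ∈ S ∧ ∃ a ∈ G.inc e, a ∈ A} := ⟨heS, ⟨b, hb, ih.2⟩⟩
    exact ⟨ih.1.trans (AdjOn.reachOn ⟨e, he', hinc⟩),
      hcl e heS ⟨b, hb, ih.2⟩ c hc⟩

end Reach

section Conn
variable [Fintype V] [Fintype E]

/-- A connected vertex set has at least `|S| + 1` vertices bound. -/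
lemma card_le_of_conn :
    ∀ n : ℕ, ∀ S : Set E, ∀ A : Set V, S.ncard ≤ n → A.Nonempty →
    (∀ e ∈ S, ∀ v : V, v ∈ G.inc e → v ∈ A) →
    (∀ u ∈ A, ∀ v ∈ A, G.ReachOn S u v) →
    A.ncard ≤ S.ncard + 1 := by
  intro n
  induction n with
  | zero =>
    intro S A hn hA hin hconn
    obtain ⟨a, ha⟩ := hA
    have hS : S = ∅ := by
      rw [← Set.ncard_eq_zero (Set.toFinite _)] at *; omega
    subst hS
    have : A = {a} := by
      apply Set.eq_singleton_iff_unique_mem.mpr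
      exact ⟨ha, fun v hv => (reach_empty (hconn a ha v hv)).symm⟩
    simp [this]
  | succ n ih =>
    intro S A hn hA hin hconn
    rcases Set.eq_empty_or_nonempty S with rfl | ⟨e₀, he₀⟩
    · obtain ⟨a, ha⟩ := hA
      have : A = {a} := by
        apply Set.eq_singleton_iff_unique_mem.mpr
        exact ⟨ha, fun v hv => (reach_empty (hconn a ha v hv)).symm⟩
      simp [this]
    · obtain ⟨x, y, hxy⟩ := sym2_rep (G.inc e₀)
      have hxA : x ∈ A := hin e₀ he₀ x (by rw [hxy]; simp)
      have hyA : y ∈ A := hin e₀ he₀ y (by rw [hxy]; simp)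
      set S' : Set E := S \ {e₀} with hS'def
      have hS'card : S'.ncard + 1 = S.ncard := Set.ncard_diff_singleton_add_one he₀ (Set.toFinite _)
      set A₁ : Set V := {v | v ∈ A ∧ G.ReachOn S' x v} with hA₁def
      set A₂ : Set V := {v | v ∈ A ∧ G.ReachOn S' y v} with hA₂def
      have hcover : ∀ v ∈ A, v ∈ A₁ ∨ v ∈ A₂ := by
        intro v hv
        rcases reach_from_endpoint hxy (hconn x hxA v hv) with h | h
        · exact Or.inl ⟨hv, h⟩
        · exact Or.inr ⟨hv, h⟩
      have hcl₁ : ∀ e ∈ S', (∃ a ∈ G.inc e, a ∈ A₁) → ∀ b ∈ G.inc e, b ∈ A₁ := by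
        rintro e heS' ⟨a, ha1, ha2, ha3⟩ b hb
        refine ⟨hin e heS'.1 b hb, ?_⟩
        rcases eq_or_ne a b with rfl | hab
        · exact ha3
        · exact ha3.trans (AdjOn.reachOn ⟨e, heS', sym2_eq_of_mem ha1 hb hab⟩)
      have hcl₂ : ∀ e ∈ S', (∃ a ∈ G.inc e, a ∈ A₂) → ∀ b ∈ G.inc e, b ∈ A₂ := by
        rintro e heS' ⟨a, ha1, ha2, ha3⟩ b hb
        refine ⟨hin e heS'.1 b hb, ?_⟩
        rcases eq_or_ne a b with rfl | hab
        · exact ha3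
        · exact ha3.trans (AdjOn.reachOn ⟨e, heS', sym2_eq_of_mem ha1 hb hab⟩)
      set S₁ : Set E := {e | e ∈ S' ∧ ∃ a ∈ G.inc e, a ∈ A₁} with hS₁def
      set S₂ : Set E := {e | e ∈ S' ∧ ∃ a ∈ G.inc e, a ∈ A₂} with hS₂def
      have hin₁ : ∀ e ∈ S₁, ∀ v : V, v ∈ G.inc e → v ∈ A₁ := fun e he v hv =>
        hcl₁ e he.1 he.2 v hv
      have hin₂ : ∀ e ∈ S₂, ∀ v : V, v ∈ G.inc e → v ∈ A₂ := fun e he v hv =>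
        hcl₂ e he.1 he.2 v hv
      have hconn₁ : ∀ u ∈ A₁, ∀ v ∈ A₁, G.ReachOn S₁ u v := by
        intro u hu v hv
        exact (reach_restrict hcl₁ hu.2.symm hu).1.trans
          (reach_restrict hcl₁ hv.2 ⟨hxA, ReachOn.refl⟩).1
      have hconn₂ : ∀ u ∈ A₂, ∀ v ∈ A₂, G.ReachOn S₂ u v := by
        intro u hu v hv
        exact (reach_restrict hcl₂ hu.2.symm hu).1.trans
          (reach_restrict hcl₂ hv.2 ⟨hyA, ReachOn.refl⟩).1
      have hS₁sub : S₁ ⊆ S' := fun e he => he.1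
      have hS₂sub : S₂ ⊆ S' := fun e he => he.1
      by_cases hxy' : G.ReachOn S' x y
      · -- one part: A is connected via S₁
        have hA₁all : ∀ v ∈ A, v ∈ A₁ := by
          intro v hv
          rcases hcover v hv with h | h
          · exact h
          · exact ⟨hv, hxy'.trans h.2⟩
        have := ih S₁ A (by
            have : S₁.ncard ≤ S'.ncard := Set.ncard_le_ncard hS₁sub (Set.toFinite _)
            omega)
          hA (fun e he v hv => (hin₁ e he v hv).1)
          (fun u hu v hv => hconn₁ u (hA₁all u hu) v (hA₁all v hv))
        have h2 : S₁.ncard ≤ S'.ncard := Set.ncard_le_ncard hS₁sub (Set.toFinite _)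
        omega
      · -- two disjoint parts
        have hdisj : ∀ v, v ∈ A₁ → v ∈ A₂ → False := by
          intro v h1 h2
          exact hxy' ((h1.2).trans h2.2.symm)
      -- A = A₁ ∪ A₂ disjoint, S₁ S₂ disjoint subsets of S'
        have hSdisj : ∀ e, e ∈ S₁ → e ∈ S₂ → False := by
          rintro e h1 h2
          obtain ⟨a, ha, haA⟩ := h1.2
          exact hdisj a (hin₁ e h1 a ha) (hin₂ e h2 a ha)
        have hAcard : A.ncard = A₁.ncard + A₂.ncard := by
          rw [← Set.ncard_union_eq (Set.disjoint_left.mpr (fun v h1 h2 => hdisj v h1 h2))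
            (Set.toFinite _) (Set.toFinite _)]
          congr 1
          apply Set.eq_of_subset_of_subset
          · intro v hv; exact hcover v hv
          · rintro v (h | h) <;> exact h.1
        have hScard : S₁.ncard + S₂.ncard ≤ S'.ncard := by
          rw [← Set.ncard_union_eq (Set.disjoint_left.mpr (fun e h1 h2 => hSdisj e h1 h2))
            (Set.toFinite _) (Set.toFinite _)]
          exact Set.ncard_le_ncard (Set.union_subset hS₁sub hS₂sub) (Set.toFinite _)
        have ih₁ := ih S₁ A₁ (by
            have : S₁.ncard ≤ S'.ncard := Set.ncard_le_ncard hS₁sub (Set.toFinite _)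
            omega)
          ⟨x, hxA, ReachOn.refl⟩ hin₁ hconn₁
        have ih₂ := ih S₂ A₂ (by
            have : S₂.ncard ≤ S'.ncard := Set.ncard_le_ncard hS₂sub (Set.toFinite _)
            omega)
          ⟨y, hyA, ReachOn.refl⟩ hin₂ hconn₂
        omega

end Conn


section Coloring
variable [Fintype V] [Fintype E]

/-- Every tree has a proper 2-colouring with a prescribed colour at a prescribed vertex. -/
lemma tree_coloring :
    ∀ n : ℕ, ∀ S : Set E, ∀ A : Set V, S.ncard ≤ n → G.IsTree A S →
    ∀ z : V, z ∈ A → ∀ b : Bool, ∃ d : V → Bool, d z = b ∧ G.ProperOn S d := by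
  intro n
  induction n with
  | zero =>
    intro S A hn _ z hz b
    have hS : S = ∅ := by rw [← Set.ncard_eq_zero (Set.toFinite _)]; omega
    subst hS
    exact ⟨fun _ => b, rfl, fun e he => absurd he (Set.notMem_empty e)⟩
  | succ n ih =>
    intro S A hn htree z hz b
    rcases Set.eq_empty_or_nonempty S with rfl | ⟨e₀, he₀⟩
    · exact ⟨fun _ => b, rfl, fun e he => absurd he (Set.notMem_empty e)⟩
    obtain ⟨x, y, hxy⟩ := sym2_rep (G.inc e₀)
    have hin := htree.edges_in
    have hconn := htree.conn
    have hxA : x ∈ A := hin e₀ he₀ x (by rw [hxy]; simp)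
    have hyA : y ∈ A := hin e₀ he₀ y (by rw [hxy]; simp)
    set S' : Set E := S \ {e₀} with hS'def
    have hS'card : S'.ncard + 1 = S.ncard := Set.ncard_diff_singleton_add_one he₀ (Set.toFinite _)
    -- the two sides of e₀
    have key : ∀ x' y' : V, G.inc e₀ = s(x', y') → z ∈ {v | v ∈ A ∧ G.ReachOn S' x' v} →
        ∃ d : V → Bool, d z = b ∧ G.ProperOn S d := by
      intro x' y' hxy' hzA₁
      have hx'A : x' ∈ A := hin e₀ he₀ x' (by rw [hxy']; simp)
      have hy'A : y' ∈ A := hin e₀ he₀ y' (by rw [hxy']; simp)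
      set A₁ : Set V := {v | v ∈ A ∧ G.ReachOn S' x' v} with hA₁def
      set A₂ : Set V := {v | v ∈ A ∧ G.ReachOn S' y' v} with hA₂def
      have hcover : ∀ v ∈ A, v ∈ A₁ ∨ v ∈ A₂ := by
        intro v hv
        rcases reach_from_endpoint hxy' (hconn x' hx'A v hv) with h | h
        · exact Or.inl ⟨hv, h⟩
        · exact Or.inr ⟨hv, h⟩
      have hcl₁ : ∀ e ∈ S', (∃ a ∈ G.inc e, a ∈ A₁) → ∀ w ∈ G.inc e, w ∈ A₁ := by
        rintro e heS' ⟨a, ha1, ha2, ha3⟩ w hw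
        refine ⟨hin e heS'.1 w hw, ?_⟩
        rcases eq_or_ne a w with rfl | haw
        · exact ha3
        · exact ha3.trans (AdjOn.reachOn ⟨e, heS', sym2_eq_of_mem ha1 hw haw⟩)
      have hcl₂ : ∀ e ∈ S', (∃ a ∈ G.inc e, a ∈ A₂) → ∀ w ∈ G.inc e, w ∈ A₂ := by
        rintro e heS' ⟨a, ha1, ha2, ha3⟩ w hw
        refine ⟨hin e heS'.1 w hw, ?_⟩
        rcases eq_or_ne a w with rfl | haw
        · exact ha3
        · exact ha3.trans (AdjOn.reachOn ⟨e, heS', sym2_eq_of_mem ha1 hw haw⟩)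
      set S₁ : Set E := {e | e ∈ S' ∧ ∃ a ∈ G.inc e, a ∈ A₁} with hS₁def
      set S₂ : Set E := {e | e ∈ S' ∧ ∃ a ∈ G.inc e, a ∈ A₂} with hS₂def
      have hin₁ : ∀ e ∈ S₁, ∀ v : V, v ∈ G.inc e → v ∈ A₁ := fun e he v hv =>
        hcl₁ e he.1 he.2 v hv
      have hin₂ : ∀ e ∈ S₂, ∀ v : V, v ∈ G.inc e → v ∈ A₂ := fun e he v hv =>
        hcl₂ e he.1 he.2 v hv
      have hconn₁ : ∀ u ∈ A₁, ∀ v ∈ A₁, G.ReachOn S₁ u v := by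
        intro u hu v hv
        exact (reach_restrict hcl₁ hu.2.symm hu).1.trans
          (reach_restrict hcl₁ hv.2 ⟨hx'A, ReachOn.refl⟩).1
      have hconn₂ : ∀ u ∈ A₂, ∀ v ∈ A₂, G.ReachOn S₂ u v := by
        intro u hu v hv
        exact (reach_restrict hcl₂ hu.2.symm hu).1.trans
          (reach_restrict hcl₂ hv.2 ⟨hy'A, ReachOn.refl⟩).1
      have hS₁sub : S₁ ⊆ S' := fun e he => he.1
      have hS₂sub : S₂ ⊆ S' := fun e he => he.1
      have hS₁c : S₁.ncard ≤ S'.ncard := Set.ncard_le_ncard hS₁sub (Set.toFinite _)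
      have hS₂c : S₂.ncard ≤ S'.ncard := Set.ncard_le_ncard hS₂sub (Set.toFinite _)
      -- x' and y' cannot be joined avoiding e₀, else too few edges
      have hxy'' : ¬ G.ReachOn S' x' y' := by
        intro hr
        have hA₁all : ∀ v ∈ A, v ∈ A₁ := by
          intro v hv
          rcases hcover v hv with h | h
          · exact h
          · exact ⟨hv, hr.trans h.2⟩
        have := card_le_of_conn S₁.ncard S₁ A le_rfl htree.nonempty
          (fun e he v hv => (hin₁ e he v hv).1)
          (fun u hu v hv => hconn₁ u (hA₁all u hu) v (hA₁all v hv))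
        have hAc := htree.card_eq
        omega
      have hdisj : ∀ v, v ∈ A₁ → v ∈ A₂ → False := fun v h1 h2 =>
        hxy'' ((h1.2).trans h2.2.symm)
      have hSdisj : ∀ e, e ∈ S₁ → e ∈ S₂ → False := by
        rintro e h1 h2
        obtain ⟨a, ha, haA⟩ := h1.2
        exact hdisj a (hin₁ e h1 a ha) (hin₂ e h2 a ha)
      have hAcard : A.ncard = A₁.ncard + A₂.ncard := by
        rw [← Set.ncard_union_eq (Set.disjoint_left.mpr (fun v h1 h2 => hdisj v h1 h2))
          (Set.toFinite _) (Set.toFinite _)]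
        congr 1
        apply Set.eq_of_subset_of_subset
        · intro v hv; exact hcover v hv
        · rintro v (h | h) <;> exact h.1
      have hSunion : S₁ ∪ S₂ = S' := by
        apply Set.eq_of_subset_of_subset (Set.union_subset hS₁sub hS₂sub)
        intro e he
        obtain ⟨p, q, hpq⟩ := sym2_rep (G.inc e)
        have hpA : p ∈ A := hin e he.1 p (by rw [hpq]; simp)
        rcases hcover p hpA with h | h
        · exact Or.inl ⟨he, p, by rw [hpq]; simp, h⟩
        · exact Or.inr ⟨he, p, by rw [hpq]; simp, h⟩
      have hScard : S₁.ncard + S₂.ncard = S'.ncard := by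
        rw [← Set.ncard_union_eq (Set.disjoint_left.mpr (fun e h1 h2 => hSdisj e h1 h2))
          (Set.toFinite _) (Set.toFinite _), hSunion]
      have hb₁ := card_le_of_conn S₁.ncard S₁ A₁ le_rfl ⟨x', hx'A, ReachOn.refl⟩ hin₁ hconn₁
      have hb₂ := card_le_of_conn S₂.ncard S₂ A₂ le_rfl ⟨y', hy'A, ReachOn.refl⟩ hin₂ hconn₂
      have hAc := htree.card_eq
      have htree₁ : G.IsTree A₁ S₁ :=
        ⟨⟨x', hx'A, ReachOn.refl⟩, hin₁, hconn₁, by omega⟩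
      have htree₂ : G.IsTree A₂ S₂ :=
        ⟨⟨y', hy'A, ReachOn.refl⟩, hin₂, hconn₂, by omega⟩
      obtain ⟨d₁, hd₁z, hd₁p⟩ := ih S₁ A₁ (by omega) htree₁ z hzA₁ b
      obtain ⟨d₂, hd₂y, hd₂p⟩ := ih S₂ A₂ (by omega) htree₂ y' ⟨hy'A, ReachOn.refl⟩ (! d₁ x')
      classical
      refine ⟨fun v => if v ∈ A₁ then d₁ v else d₂ v, by simp [hzA₁, hd₁z], ?_⟩
      intro e he u v huv
      rcases eq_or_ne e e₀ with rfl | hne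
      · have : s(x', y') = s(u, v) := by rw [← hxy', huv]
        have hx'₁ : x' ∈ A₁ := ⟨hx'A, ReachOn.refl⟩
        have hy'₂ : y' ∉ A₁ := fun h => hdisj y' h ⟨hy'A, ReachOn.refl⟩
        rcases Sym2.eq_iff.mp this with ⟨rfl, rfl⟩ | ⟨rfl, rfl⟩
        · simp only [if_pos hx'₁, if_neg hy'₂, hd₂y]
          cases d₁ x' <;> simp
        · simp only [if_pos hx'₁, if_neg hy'₂, hd₂y]
          cases d₁ x' <;> simp
      · have heS' : e ∈ S' := ⟨he, hne⟩
        have huinc : u ∈ G.inc e := by rw [huv]; simp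
        have hvinc : v ∈ G.inc e := by rw [huv]; simp
        have : e ∈ S₁ ∪ S₂ := hSunion ▸ heS'
        rcases this with h | h
        · have hu1 : u ∈ A₁ := hin₁ e h u huinc
          have hv1 : v ∈ A₁ := hin₁ e h v hvinc
          simpa [if_pos hu1, if_pos hv1] using hd₁p e h u v huv
        · have hu2 : u ∈ A₂ := hin₂ e h u huinc
          have hv2 : v ∈ A₂ := hin₂ e h v hvinc
          have hu1 : u ∉ A₁ := fun hh => hdisj u hh hu2
          have hv1 : v ∉ A₁ := fun hh => hdisj v hh hv2
          simpa [if_neg hu1, if_neg hv1] using hd₂p e h u v huv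
    -- apply `key` on the side containing z
    rcases reach_from_endpoint hxy (htree.conn x hxA z hz) with h | h
    · exact key x y hxy ⟨hz, h⟩
    · exact key y x (hxy.trans Sym2.eq_swap) ⟨hz, h⟩

/-- Attaching a new vertex to a tree by a single edge. -/
lemma tree_attach {A : Set V} {S : Set E} (htree : G.IsTree A S)
    {u p : V} {f : E} (hu : u ∉ A) (hf : f ∉ S) (hfinc : G.inc f = s(u, p)) (hp : p ∈ A) :
    G.IsTree (insert u A) (insert f S) := by
  constructor
  · exact ⟨u, Set.mem_insert u A⟩
  · intro e he v hv
    rcases he with rfl | he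
    · rw [hfinc, Sym2.mem_iff] at hv
      rcases hv with rfl | rfl
      · exact Set.mem_insert v A
      · exact Set.mem_insert_of_mem u hp
    · exact Set.mem_insert_of_mem u (htree.edges_in e he v hv)
  · have hadj : G.AdjOn (insert f S) u p := ⟨f, Set.mem_insert f S, hfinc⟩
    have hsub : S ⊆ insert f S := Set.subset_insert f S
    intro a ha v hv
    rcases ha with rfl | ha <;> rcases hv with rfl | hv
    · exact ReachOn.refl
    · exact hadj.reachOn.trans ((htree.conn p hp v hv).mono hsub)
    · exact ((htree.conn a ha p hp).mono hsub).trans hadj.reachOn.symm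
    · exact (htree.conn a ha v hv).mono hsub
  · rw [Set.ncard_insert_of_notMem hf (Set.toFinite _),
      Set.ncard_insert_of_notMem hu (Set.toFinite _), htree.card_eq]

end Coloring


section Cycle
variable [Fintype V] [Fintype E]

lemma exists_other {e : E} {u : V} (hu : u ∈ G.inc e) :
    ∃ a : V, G.inc e = s(u, a) ∧ a ≠ u := by
  obtain ⟨p, q, hpq⟩ := sym2_rep (G.inc e)
  rw [hpq, Sym2.mem_iff] at hu
  rcases hu with rfl | rfl
  · exact ⟨q, hpq, fun h => inc_ne hpq h.symm⟩
  · exact ⟨p, hpq.trans Sym2.eq_swap, fun h => inc_ne hpq h⟩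

/-- Deleting a vertex (and its two edges) from a connected 2-regular graph (a cycle)
leaves a tree. -/
lemma cycle_delete_vertex {C : Set V} {FC : Set E}
    (hFCin : ∀ e ∈ FC, ∀ v : V, v ∈ G.inc e → v ∈ C)
    (hdeg : ∀ v ∈ C, G.degOn FC v = 2)
    (hconn : ∀ u ∈ C, ∀ v ∈ C, G.ReachOn FC u v)
    (hcard : FC.ncard = C.ncard)
    {u : V} (hu : u ∈ C) :
    G.IsTree (C \ {u}) (FC \ {e | e ∈ FC ∧ u ∈ G.inc e}) := by
  classical
  set Du : Set E := {e | e ∈ FC ∧ u ∈ G.inc e} with hDudef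
  have hDu2 : Du.ncard = 2 := hdeg u hu
  obtain ⟨f₁, f₂, hf12, hDu⟩ := Set.ncard_eq_two.mp hDu2
  have hf₁Du : f₁ ∈ Du := by rw [hDu]; simp
  have hf₂Du : f₂ ∈ Du := by rw [hDu]; simp
  obtain ⟨a, hf₁inc, hau⟩ := exists_other hf₁Du.2
  obtain ⟨b, hf₂inc, hbu⟩ := exists_other hf₂Du.2
  have haC : a ∈ C := hFCin f₁ hf₁Du.1 a (by rw [hf₁inc]; simp)
  have hbC : b ∈ C := hFCin f₂ hf₂Du.1 b (by rw [hf₂inc]; simp)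
  set S₂ : Set E := FC \ Du with hS₂def
  have hedges : ∀ e ∈ S₂, ∀ v : V, v ∈ G.inc e → v ∈ C \ {u} := by
    rintro e ⟨heFC, heDu⟩ v hv
    refine ⟨hFCin e heFC v hv, ?_⟩
    rintro rfl
    exact heDu ⟨heFC, hv⟩
  have hatu : ∀ e ∈ FC, u ∈ G.inc e → e = f₁ ∨ e = f₂ := by
    intro e he hue
    have : e ∈ Du := ⟨he, hue⟩
    rw [hDu] at this; exact this
  -- every vertex of C is u or reachable from a or b in S₂
  have claim1 : ∀ x ∈ C, x = u ∨ G.ReachOn S₂ a x ∨ G.ReachOn S₂ b x := by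
    intro x hx
    have hr : G.ReachOn FC u x := hconn u hu x hx
    clear hx
    induction hr with
    | refl => exact Or.inl rfl
    | tail _ hstep ih =>
      rename_i p q _
      obtain ⟨e, heFC, hinc⟩ := hstep
      by_cases heDu : e ∈ Du
      · -- the step uses f₁ or f₂
        have hef : e = f₁ ∨ e = f₂ := by rw [hDu] at heDu; exact heDu
        rcases hef with rfl | rfl
        · have h2 : s(u, a) = s(p, q) := by rw [← hf₁inc, hinc]
          rcases Sym2.eq_iff.mp h2 with ⟨h3, h4⟩ | ⟨h3, h4⟩
          · exact Or.inr (Or.inl (h4 ▸ ReachOn.refl))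
          · exact Or.inl h3.symm
        · have h2 : s(u, b) = s(p, q) := by rw [← hf₂inc, hinc]
          rcases Sym2.eq_iff.mp h2 with ⟨h3, h4⟩ | ⟨h3, h4⟩
          · exact Or.inr (Or.inr (h4 ▸ ReachOn.refl))
          · exact Or.inl h3.symm
      · -- the step stays away from u
        have hadj : G.AdjOn S₂ p q := ⟨e, ⟨heFC, heDu⟩, hinc⟩
        rcases ih with hpu | ih
        · -- p = u : impossible since e ∉ Du but u ∈ inc e
          exact absurd ⟨heFC, by rw [hinc, Sym2.mem_iff]; exact Or.inl hpu.symm⟩ heDu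
        · rcases ih with ih | ih
          · exact Or.inr (Or.inl (ih.trans hadj.reachOn))
          · exact Or.inr (Or.inr (ih.trans hadj.reachOn))
  have hnotu : ∀ x : V, G.ReachOn S₂ a x ∨ G.ReachOn S₂ b x → x ≠ u := by
    intro x hx heq
    rw [heq] at hx
    have hstop : ∀ w : V, G.ReachOn S₂ w u → w = u := by
      intro w hw
      rcases Relation.ReflTransGen.cases_tail hw with heq' | ⟨c, _, hadj⟩
      · exact heq'.symm
      · obtain ⟨e, heS₂, hinc⟩ := hadj
        exact absurd rfl ((hedges e heS₂ u (by rw [hinc]; simp)).2)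
    rcases hx with hx | hx
    · exact hau (hstop a hx)
    · exact hbu (hstop b hx)
  -- a and b are joined within S₂
  have hab : G.ReachOn S₂ a b := by
    by_contra hab
    have hne_ab : a ≠ b := by rintro rfl; exact hab ReachOn.refl
    set A : Set V := {x | x ∈ C ∧ G.ReachOn S₂ a x} with hAdef
    have hclA : ∀ e ∈ S₂, (∃ w ∈ G.inc e, w ∈ A) → ∀ v ∈ G.inc e, v ∈ A := by
      rintro e heS₂ ⟨w, hw1, hw2, hw3⟩ v hv
      refine ⟨(hedges e heS₂ v hv).1, ?_⟩
      rcases eq_or_ne w v with rfl | hwv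
      · exact hw3
      · exact hw3.trans (AdjOn.reachOn ⟨e, heS₂, sym2_eq_of_mem hw1 hv hwv⟩)
    set SA : Set E := {e | e ∈ S₂ ∧ ∃ w ∈ G.inc e, w ∈ A} with hSAdef
    have hinA : ∀ e ∈ SA, ∀ v : V, v ∈ G.inc e → v ∈ A := fun e he v hv =>
      hclA e he.1 he.2 v hv
    have hhs := handshake (G := G) A SA hinA
    have hdegA : ∀ v ∈ A, G.degOn SA v = G.degOn S₂ v := by
      intro v hv
      unfold degOn
      congr 1
      ext e
      simp only [Set.mem_setOf_eq]
      constructor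
      · rintro ⟨⟨h1, _⟩, h2⟩; exact ⟨h1, h2⟩
      · rintro ⟨h1, h2⟩; exact ⟨⟨h1, ⟨v, h2, hv⟩⟩, h2⟩
    have hbA : b ∉ A := fun h => hab h.2
    have hdegS₂ : ∀ v ∈ A, G.degOn S₂ v = if v = a then 1 else 2 := by
      intro v hv
      have hvu : v ≠ u := hnotu v (Or.inl hv.2)
      have h1 := degOn_sdiff_add (G := G) FC Du v
      have hcap : FC ∩ Du = Du := Set.inter_eq_self_of_subset_right (fun e he => he.1)
      rw [hcap, ← hS₂def] at h1
      have hDupair : G.degOn Du v = (if v ∈ G.inc f₁ then 1 else 0) +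
          (if v ∈ G.inc f₂ then 1 else 0) := by
        rw [hDu, show ({f₁, f₂} : Set E) = {f₁} ∪ {f₂} by rfl,
          degOn_union (by simp [Set.disjoint_left, hf12]), degOn_singleton, degOn_singleton]
      have hvf₁ : v ∈ G.inc f₁ ↔ v = a := by
        rw [hf₁inc, Sym2.mem_iff]
        exact ⟨fun h => h.resolve_left hvu, fun h => Or.inr h⟩
      have hvf₂ : v ∈ G.inc f₂ ↔ v = b := by
        rw [hf₂inc, Sym2.mem_iff]
        exact ⟨fun h => h.resolve_left hvu, fun h => Or.inr h⟩
      have hvb : v ≠ b := fun h => hbA (h ▸ hv)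
      have hd2 : G.degOn FC v = 2 := hdeg v hv.1
      rcases eq_or_ne v a with hva | hva
      · rw [if_pos hva]
        rw [hDupair, if_pos (hvf₁.mpr hva), if_neg (fun h => hvb (hvf₂.mp h))] at h1
        omega
      · rw [if_neg hva]
        rw [hDupair, if_neg (fun h => hva (hvf₁.mp h)),
          if_neg (fun h => hvb (hvf₂.mp h))] at h1
        omega
    have haA : a ∈ A := by rw [hAdef]; exact ⟨haC, ReachOn.refl⟩
    have hsum : ∑ v ∈ A.toFinite.toFinset, G.degOn SA v = 2 * A.ncard - 1 := by
      have hmem : a ∈ A.toFinite.toFinset := (Set.Finite.mem_toFinset _).mpr haA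
      rw [← Finset.sum_erase_add _ _ hmem]
      have : ∀ v ∈ (A.toFinite.toFinset.erase a), G.degOn SA v = 2 := by
        intro v hv
        have hv' : v ∈ A ∧ v ≠ a := by
          constructor
          · have := Finset.mem_of_mem_erase hv; exact (Set.Finite.mem_toFinset _).mp this
          · exact Finset.ne_of_mem_erase hv
        rw [hdegA v hv'.1, hdegS₂ v hv'.1, if_neg hv'.2]
      rw [Finset.sum_congr rfl this, Finset.sum_const, smul_eq_mul,
        hdegA a haA, hdegS₂ a haA, if_pos rfl,
        Finset.card_erase_of_mem hmem]
      have hcardA : A.toFinite.toFinset.card = A.ncard := by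
        rw [← Set.ncard_coe_finset, Set.Finite.coe_toFinset]
      have hApos : 0 < A.ncard := (Set.ncard_pos (Set.toFinite _)).mpr ⟨a, haA⟩
      omega
    rw [hhs] at hsum
    have hApos : 0 < A.ncard := (Set.ncard_pos (Set.toFinite _)).mpr ⟨a, haA⟩
    omega
  -- now assemble the tree
  have hDusub : Du ⊆ FC := fun e he => he.1
  have hC2 : 2 ≤ C.ncard := by
    have : ({u, a} : Set V).ncard = 2 := Set.ncard_pair (fun h => hau h.symm)
    calc 2 = ({u, a} : Set V).ncard := this.symm
      _ ≤ C.ncard := Set.ncard_le_ncard (by rintro v (rfl | rfl); exacts [hu, haC])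
        (Set.toFinite _)
  refine ⟨⟨a, haC, hau⟩, hedges, ?_, ?_⟩
  · intro x hx y hy
    have hget : ∀ v ∈ C \ {u}, G.ReachOn S₂ a v := by
      rintro v ⟨hv1, hv2⟩
      rcases claim1 v hv1 with rfl | h
      · exact absurd rfl hv2
      · rcases h with h | h
        · exact h
        · exact hab.trans h
    exact (hget x hx).symm.trans (hget y hy)
  · have h1 : (FC \ Du).ncard = FC.ncard - 2 := by
      rw [Set.ncard_diff hDusub (Set.toFinite _), hDu2]
    have h2 : (C \ {u}).ncard = C.ncard - 1 := by
      rw [Set.ncard_diff (by simpa using hu) (Set.toFinite _), Set.ncard_singleton]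
    rw [h1, h2, hcard]
    omega

/-- Deleting one edge from a connected 2-regular graph leaves a (spanning) tree. -/
lemma cycle_delete_edge {C : Set V} {FC : Set E}
    (hFCin : ∀ e ∈ FC, ∀ v : V, v ∈ G.inc e → v ∈ C)
    (hdeg : ∀ v ∈ C, G.degOn FC v = 2)
    (hconn : ∀ u ∈ C, ∀ v ∈ C, G.ReachOn FC u v)
    (hcard : FC.ncard = C.ncard)
    {f₀ : E} (hf₀ : f₀ ∈ FC) :
    G.IsTree C (FC \ {f₀}) := by
  classical
  obtain ⟨u, v₀, hf₀inc⟩ := sym2_rep (G.inc f₀)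
  have hu : u ∈ C := hFCin f₀ hf₀ u (by rw [hf₀inc]; simp)
  set Du : Set E := {e | e ∈ FC ∧ u ∈ G.inc e} with hDudef
  have hDu2 : Du.ncard = 2 := hdeg u hu
  obtain ⟨g₁, g₂, hg12, hDu⟩ := Set.ncard_eq_two.mp hDu2
  have hf₀Du : f₀ ∈ Du := ⟨hf₀, by rw [hf₀inc]; simp⟩
  have h₀ : f₀ = g₁ ∨ f₀ = g₂ := by have := hf₀Du; rw [hDu] at this; exact this
  obtain ⟨f₁, hf₁Du, hf₁ne⟩ : ∃ f₁ : E, (f₁ ∈ FC ∧ u ∈ G.inc f₁) ∧ f₁ ≠ f₀ := by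
    rcases h₀ with h | h
    · refine ⟨g₂, ?_, fun hh => hg12 (hh.trans h).symm⟩
      have : g₂ ∈ Du := by rw [hDu]; simp
      exact this
    · refine ⟨g₁, ?_, fun hh => hg12 (hh.trans h)⟩
      have : g₁ ∈ Du := by rw [hDu]; simp
      exact this
  have h₁ : f₁ = g₁ ∨ f₁ = g₂ := by
    have : f₁ ∈ Du := hf₁Du
    rw [hDu] at this; exact this
  have hDumem : ∀ g, g ∈ Du → g = f₀ ∨ g = f₁ := by
    intro g hg
    have hg' : g = g₁ ∨ g = g₂ := by rw [hDu] at hg; exact hg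
    rcases h₀ with h₀ | h₀ <;> rcases h₁ with h₁ | h₁ <;> rcases hg' with hg' | hg' <;>
      first
        | exact absurd (h₁.trans h₀.symm) hf₁ne
        | exact Or.inl (hg'.trans h₀.symm)
        | exact Or.inr (hg'.trans h₁.symm)
  obtain ⟨p, hf₁inc, hpu⟩ := exists_other hf₁Du.2
  have hpC : p ∈ C := hFCin f₁ hf₁Du.1 p (by rw [hf₁inc]; simp)
  have htree := cycle_delete_vertex hFCin hdeg hconn hcard hu
  have hins : insert u (C \ {u}) = C := by
    rw [Set.insert_diff_singleton]
    exact Set.insert_eq_self.mpr hu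
  have heq : FC \ {f₀} = insert f₁ (FC \ Du) := by
    ext e
    simp only [Set.mem_diff, Set.mem_singleton_iff, Set.mem_insert_iff]
    constructor
    · rintro ⟨heFC, hne⟩
      by_cases heDu : e ∈ Du
      · rcases hDumem e heDu with h | h
        · exact absurd h hne
        · exact Or.inl h
      · exact Or.inr ⟨heFC, heDu⟩
    · rintro (rfl | ⟨heFC, heDu⟩)
      · exact ⟨hf₁Du.1, hf₁ne⟩
      · exact ⟨heFC, fun h => heDu (h ▸ hf₀Du)⟩
  rw [heq, ← hins]
  exact tree_attach htree (by simp)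
    (fun hh => hh.2 ⟨hf₁Du.1, hf₁Du.2⟩) hf₁inc ⟨hpC, hpu⟩

end Cycle


section Master
variable [Fintype V] [Fintype E]

set_option maxHeartbeats 800000 in
/-- The master extension lemma: if the component of `z` carries a spanning tree with a
proper colouring giving `z` colour `false` and all its max-degree leaves other than `z`
colour `false`, then `T` was not maximum. -/
lemma master_extension
    {F : Set E} (hF : G.IsWeakTwoFactor F) {w : V} {lam : Bool}
    {U : Set V} {S : Set E} {c : V → Bool}
    (hwU : w ∈ U) (htree : G.IsTree U S)
    (hgood : ∀ u ∈ U, ∀ v : V, G.ReachOn F u v → v ∈ U)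
    (hc : G.ProperOn S c) (hcw : c w = lam)
    (hwe : ∀ v : V, G.IsLeaf S v → G.degree v = G.maxDegree → c v = false)
    (hmax : ∀ (U' : Set V) (S' : Set E) (c' : V → Bool),
      w ∈ U' → G.IsTree U' S' →
      (∀ u ∈ U', ∀ v : V, G.ReachOn F u v → v ∈ U') →
      G.ProperOn S' c' → c' w = lam →
      (∀ v : V, G.IsLeaf S' v → G.degree v = G.maxDegree → c' v = false) →
      U'.ncard ≤ U.ncard)
    {y0 z : V} {e' : E} (he' : G.inc e' = s(y0, z))
    (hy0 : y0 ∈ U) (hy0c : c y0 = true) (hz : z ∉ U)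
    {S₂ : Set E} {d : V → Bool}
    (htree₂ : G.IsTree {x | G.ReachOn F z x} S₂)
    (hdz : d z = false) (hd : G.ProperOn S₂ d)
    (hleaf : ∀ x ∈ {x : V | G.ReachOn F z x}, x ≠ z → G.IsLeaf S₂ x →
      G.degree x = G.maxDegree → d x = false) : False := by
  classical
  set C : Set V := {x | G.ReachOn F z x} with hCdef
  have hzC : z ∈ C := ReachOn.refl
  have hUC : ∀ x ∈ U, x ∉ C := by
    intro x hx hxC
    exact hz (hgood x hx z (ReachOn.symm hxC))
  have hCU : ∀ x ∈ C, x ∉ U := fun x hx hxU => hUC x hxU hx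
  have hyC : y0 ∉ C := hUC y0 hy0
  have hwC : w ∉ C := hUC w hwU
  have hzinc : z ∈ G.inc e' := by rw [he']; simp
  have hy0inc : y0 ∈ G.inc e' := by rw [he']; simp
  have hSe' : e' ∉ S := fun h => hz (htree.edges_in e' h z hzinc)
  have he'S₂ : e' ∉ S₂ := fun h => hyC (htree₂.edges_in e' h y0 hy0inc)
  have hSS₂ : ∀ e, e ∈ S → e ∈ S₂ → False := by
    intro e h1 h2
    obtain ⟨p, q, hpq⟩ := sym2_rep (G.inc e)
    have hp : p ∈ G.inc e := by rw [hpq]; simp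
    exact hUC p (htree.edges_in e h1 p hp) (htree₂.edges_in e h2 p hp)
  set U' : Set V := U ∪ C with hU'def
  set S' : Set E := (S ∪ {e'}) ∪ S₂ with hS'def
  set c' : V → Bool := fun v => if v ∈ C then d v else c v with hc'def
  have hc'U : ∀ v ∈ U, c' v = c v := fun v hv => if_neg (hUC v hv)
  have hc'C : ∀ v ∈ C, c' v = d v := fun v hv => if_pos hv
  -- S' decompositions
  have hdisj1 : Disjoint S ({e'} : Set E) := by
    rw [Set.disjoint_left]; rintro e he rfl; exact hSe' he
  have hdisj2 : Disjoint (S ∪ {e'}) S₂ := by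
    rw [Set.disjoint_left]
    rintro e (he | rfl) he₂
    · exact hSS₂ e he he₂
    · exact he'S₂ he₂
  have hS'deg : ∀ v : V, G.degOn S' v = G.degOn S v + G.degOn {e'} v + G.degOn S₂ v := by
    intro v
    rw [hS'def, degOn_union hdisj2, degOn_union hdisj1]
  -- the new tree
  have hSsub : S ⊆ S' := fun e he => Or.inl (Or.inl he)
  have hS₂sub : S₂ ⊆ S' := fun e he => Or.inr he
  have hbridge : G.AdjOn S' y0 z := ⟨e', Or.inl (Or.inr rfl), he'⟩
  have htree' : G.IsTree U' S' := by
    refine ⟨⟨w, Or.inl hwU⟩, ?_, ?_, ?_⟩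
    · rintro e ((he | rfl) | he) v hv
      · exact Or.inl (htree.edges_in e he v hv)
      · rw [he', Sym2.mem_iff] at hv
        rcases hv with rfl | rfl
        · exact Or.inl hy0
        · exact Or.inr hzC
      · exact Or.inr (htree₂.edges_in e he v hv)
    · rintro x (hx | hx) v (hv | hv)
      · exact (htree.conn x hx v hv).mono hSsub
      · exact (((htree.conn x hx y0 hy0).mono hSsub).trans hbridge.reachOn).trans
          ((htree₂.conn z hzC v hv).mono hS₂sub)
      · exact (((htree₂.conn x hx z hzC).mono hS₂sub).trans hbridge.reachOn.symm).trans
          ((htree.conn y0 hy0 v hv).mono hSsub)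
      · exact (htree₂.conn x hx v hv).mono hS₂sub
    · have h1 : U'.ncard = U.ncard + C.ncard :=
        Set.ncard_union_eq (Set.disjoint_left.mpr (fun x hx => hUC x hx))
          (Set.toFinite _) (Set.toFinite _)
      have h2 : (S ∪ {e'}).ncard = S.ncard + 1 := by
        rw [Set.ncard_union_eq hdisj1 (Set.toFinite _) (Set.toFinite _), Set.ncard_singleton]
      have h3 : S'.ncard = (S ∪ {e'}).ncard + S₂.ncard :=
        Set.ncard_union_eq hdisj2 (Set.toFinite _) (Set.toFinite _)
      have h4 := htree.card_eq
      have h5 := htree₂.card_eq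
      omega
  -- goodness
  have hgood' : ∀ u ∈ U', ∀ v : V, G.ReachOn F u v → v ∈ U' := by
    rintro u (hu | hu) v hr
    · exact Or.inl (hgood u hu v hr)
    · exact Or.inr (ReachOn.trans hu hr)
  -- properness
  have hc' : G.ProperOn S' c' := by
    rintro e ((he | rfl) | he) u v huv
    · have hu : u ∈ U := htree.edges_in e he u (by rw [huv]; simp)
      have hv : v ∈ U := htree.edges_in e he v (by rw [huv]; simp)
      rw [hc'U u hu, hc'U v hv]
      exact hc e he u v huv
    · have : s(y0, z) = s(u, v) := by rw [← he', huv]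
      rcases Sym2.eq_iff.mp this with ⟨h1, h2⟩ | ⟨h1, h2⟩
      · rw [← h1, ← h2, hc'U y0 hy0, hc'C z hzC, hy0c, hdz]; simp
      · rw [← h1, ← h2, hc'U y0 hy0, hc'C z hzC, hy0c, hdz]; simp
    · have hu : u ∈ C := htree₂.edges_in e he u (by rw [huv]; simp)
      have hv : v ∈ C := htree₂.edges_in e he v (by rw [huv]; simp)
      rw [hc'C u hu, hc'C v hv]
      exact hd e he u v huv
  -- weak evenness
  have hwe' : ∀ v : V, G.IsLeaf S' v → G.degree v = G.maxDegree → c' v = false := by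
    intro v hv hdeg
    have hv1 : G.degOn S' v = 1 := hv
    rw [hS'deg v] at hv1
    by_cases hvU : v ∈ U
    · have hS₂0 : G.degOn S₂ v = 0 := by
        by_contra h
        obtain ⟨e, he, hve⟩ := exists_edge_of_degOn_pos (Nat.pos_of_ne_zero h)
        exact hUC v hvU (htree₂.edges_in e he v hve)
      rw [hc'U v hvU]
      by_cases hvy : v = y0
      · subst hvy
        have he'1 : G.degOn {e'} v = 1 := by rw [degOn_singleton, if_pos hy0inc]
        have hS0 : G.degOn S v = 0 := by omega
        have hUsing : ∀ u ∈ U, u = v := by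
          intro u hu
          rcases Relation.ReflTransGen.cases_head (htree.conn v hy0 u hu) with heq | hh
          · exact heq.symm
          · obtain ⟨c0, ⟨e, heS, hinc⟩, _⟩ := hh
            have : 0 < G.degOn S v := degOn_pos_of_edge heS (by rw [hinc]; simp)
            omega
        have hF0 : G.degOn F v = 0 := by
          by_contra h
          obtain ⟨f, hf, hyf⟩ := exists_edge_of_degOn_pos (Nat.pos_of_ne_zero h)
          obtain ⟨q, hfinc, hq⟩ := exists_other hyf
          exact hq (hUsing q (hgood v hy0 q (AdjOn.reachOn ⟨f, hf, hfinc⟩)))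
        have hlt : G.degree v < G.maxDegree := (hF v).2 (by omega)
        exact absurd hdeg (Nat.ne_of_lt hlt)
      · have he'0 : G.degOn {e'} v = 0 := by
          rw [degOn_singleton, if_neg]
          rw [he', Sym2.mem_iff]
          rintro (rfl | rfl)
          · exact hvy rfl
          · exact hz hvU
        have hS1 : G.degOn S v = 1 := by omega
        exact hwe v hS1 hdeg
    · by_cases hvC : v ∈ C
      · have hS0 : G.degOn S v = 0 := by
          by_contra h
          obtain ⟨e, he, hve⟩ := exists_edge_of_degOn_pos (Nat.pos_of_ne_zero h)
          exact hvU (htree.edges_in e he v hve)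
        rw [hc'C v hvC]
        by_cases hvz : v = z
        · subst hvz
          have he'1 : G.degOn {e'} v = 1 := by rw [degOn_singleton, if_pos hzinc]
          have hS₂0 : G.degOn S₂ v = 0 := by omega
          have hF0 : G.degOn F v = 0 := by
            by_contra h
            obtain ⟨f, hf, hyf⟩ := exists_edge_of_degOn_pos (Nat.pos_of_ne_zero h)
            obtain ⟨q, hfinc, hq⟩ := exists_other hyf
            have hqC : q ∈ C := AdjOn.reachOn ⟨f, hf, hfinc⟩
            rcases Relation.ReflTransGen.cases_head (htree₂.conn v hzC q hqC) with heq | hh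
            · exact hq heq.symm
            · obtain ⟨c0, ⟨e, heS, hinc⟩, _⟩ := hh
              have : 0 < G.degOn S₂ v := degOn_pos_of_edge heS (by rw [hinc]; simp)
              omega
          have hlt : G.degree v < G.maxDegree := (hF v).2 (by omega)
          exact absurd hdeg (Nat.ne_of_lt hlt)
        · have he'0 : G.degOn {e'} v = 0 := by
            rw [degOn_singleton, if_neg]
            rw [he', Sym2.mem_iff]
            rintro (rfl | rfl)
            · exact hyC hvC
            · exact hvz rfl
          have hS₂1 : G.degOn S₂ v = 1 := by omega
          exact hleaf v hvC hvz hS₂1 hdeg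
      · exfalso
        have hS0 : G.degOn S v = 0 := by
          by_contra h
          obtain ⟨e, he, hve⟩ := exists_edge_of_degOn_pos (Nat.pos_of_ne_zero h)
          exact hvU (htree.edges_in e he v hve)
        have hS₂0 : G.degOn S₂ v = 0 := by
          by_contra h
          obtain ⟨e, he, hve⟩ := exists_edge_of_degOn_pos (Nat.pos_of_ne_zero h)
          exact hvC (htree₂.edges_in e he v hve)
        have he'0 : G.degOn {e'} v = 0 := by
          rw [degOn_singleton, if_neg]
          rw [he', Sym2.mem_iff]
          rintro (rfl | rfl)
          · exact hvU hy0
          · exact hvC hzC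
        omega
  -- contradiction with maximality
  have hle := hmax U' S' c' (Or.inl hwU) htree' hgood' hc'
    (by rw [hc'def]; simp only [if_neg hwC]; exact hcw) hwe'
  have h1 : U'.ncard = U.ncard + C.ncard :=
    Set.ncard_union_eq (Set.disjoint_left.mpr (fun x hx => hUC x hx))
      (Set.toFinite _) (Set.toFinite _)
  have hCpos : 0 < C.ncard := (Set.ncard_pos (Set.toFinite _)).mpr ⟨z, hzC⟩
  omega

end Master

end Multigraph

set_option maxHeartbeats 1600000

/-- Let `G` be a 2-edge-connected non-regular multigraph, `F`
a weak 2-factor of `G`, `w ∈ V(G)` and `lam ∈ {0,1}` (with `false` for type 0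
and `true` for type 1). Let `T` (vertex set `U`, edge set `S`) be a good weakly
even `(w, lam)`-tree of maximum order, with `(w, lam)`-bipartition given by the
proper 2-colouring `c` (so `Y₀ = {v ∈ U | c v = true}`), and suppose
`U ≠ V(G)`. Suppose some edge of `G` joins `y0 ∈ Y₀` to `z ∉ U`. Then the
component `C = {v | z ⟶F v}` of `F` containing `z` is an even cycle (every
vertex of `C` has degree 2 in `F`, and `C` admits a proper 2-colouring with
`z` of type 0); moreover for the bipartition `(X, Y)` of `C` with `z ∈ X`
(given by a proper 2-colouring `d` of `C` with `d z = false`, where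
`Y = {v ∈ C | d v = true}`), every vertex of `Y` has degree `Δ(G)` in `G` and
`Y` is an independent set in `G`. -/
theorem component_of_outside_neighbour_even_cycle {V E : Type} [Fintype V] [Fintype E]
    (G : Multigraph V E) (h2ec : G.TwoEdgeConnected) (hnreg : ¬ G.IsRegular)
    (F : Set E) (hF : G.IsWeakTwoFactor F) (w : V) (lam : Bool)
    (U : Set V) (S : Set E) (c : V → Bool)
    (hwU : w ∈ U) (htree : G.IsTree U S)
    (hgood : ∀ u ∈ U, ∀ v : V, G.ReachOn F u v → v ∈ U)
    (hc : G.ProperOn S c) (hcw : c w = lam)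
    (hwe : ∀ v : V, G.IsLeaf S v → G.degree v = G.maxDegree → c v = false)
    (hmax : ∀ (U' : Set V) (S' : Set E) (c' : V → Bool),
      w ∈ U' → G.IsTree U' S' →
      (∀ u ∈ U', ∀ v : V, G.ReachOn F u v → v ∈ U') →
      G.ProperOn S' c' → c' w = lam →
      (∀ v : V, G.IsLeaf S' v → G.degree v = G.maxDegree → c' v = false) →
      U'.ncard ≤ U.ncard)
    (hne : U ≠ Set.univ)
    (y0 z : V) (e' : E) (he' : G.inc e' = s(y0, z))
    (hy0 : y0 ∈ U) (hy0c : c y0 = true) (hz : z ∉ U) :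
    (∀ v ∈ {x : V | G.ReachOn F z x}, G.degOn F v = 2) ∧
    (∃ d : V → Bool, d z = false ∧
      ∀ e ∈ F, ∀ u v : V, G.inc e = s(u, v) → u ∈ {x : V | G.ReachOn F z x} → d u ≠ d v) ∧
    (∀ d : V → Bool, d z = false →
      (∀ e ∈ F, ∀ u v : V, G.inc e = s(u, v) → u ∈ {x : V | G.ReachOn F z x} → d u ≠ d v) →
      (∀ v ∈ {x : V | G.ReachOn F z x}, d v = true → G.degree v = G.maxDegree) ∧
      (∀ (e : E) (u v : V), G.inc e = s(u, v) →
        u ∈ {x : V | G.ReachOn F z x} → d u = true →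
        v ∈ {x : V | G.ReachOn F z x} → d v = true → False)) := by
  classical
  open Multigraph in
  set C : Set V := {x | G.ReachOn F z x} with hCdef
  have hzC : z ∈ C := ReachOn.refl
  -- C is closed under edges of F
  have hCcl : ∀ e ∈ F, (∃ a ∈ G.inc e, a ∈ C) → ∀ b ∈ G.inc e, b ∈ C := by
    rintro e heF ⟨a, ha1, ha2⟩ b hb
    rcases eq_or_ne a b with rfl | hab
    · exact ha2
    · exact ReachOn.trans ha2 (AdjOn.reachOn ⟨e, heF, sym2_eq_of_mem ha1 hb hab⟩)
  set FC : Set E := {e | e ∈ F ∧ ∃ a ∈ G.inc e, a ∈ C} with hFCdef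
  have hFCin : ∀ e ∈ FC, ∀ v : V, v ∈ G.inc e → v ∈ C := fun e he v hv =>
    hCcl e he.1 he.2 v hv
  have hFCconn : ∀ u ∈ C, ∀ v ∈ C, G.ReachOn FC u v := by
    intro u hu v hv
    exact ((reach_restrict hCcl hu hzC).1.symm).trans (reach_restrict hCcl hv hzC).1
  have hdegFC : ∀ v ∈ C, G.degOn FC v = G.degOn F v := by
    intro v hv
    unfold Multigraph.degOn
    congr 1
    ext e
    simp only [Set.mem_setOf_eq]
    exact ⟨fun h => ⟨h.1.1, h.2⟩, fun h => ⟨⟨h.1, v, h.2, hv⟩, h.2⟩⟩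
  -- Part 1 : every vertex of C has degree 2 in F
  have hdeg2 : ∀ v ∈ C, G.degOn F v = 2 := by
    by_contra hcon
    push_neg at hcon
    obtain ⟨v₀, hv₀C, hv₀ne⟩ := hcon
    have hv₀le : G.degOn F v₀ ≤ 1 := by
      have := (hF v₀).1
      omega
    -- FC is a tree on C
    have hhs := handshake (G := G) C FC hFCin
    have hv₀mem : v₀ ∈ C.toFinite.toFinset := (Set.Finite.mem_toFinset _).mpr hv₀C
    have hsumle : ∑ v ∈ C.toFinite.toFinset, G.degOn FC v ≤ 2 * C.ncard - 1 := by
      rw [← Finset.sum_erase_add _ _ hv₀mem]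
      have hbound : ∑ v ∈ C.toFinite.toFinset.erase v₀, G.degOn FC v ≤
          (C.toFinite.toFinset.erase v₀).card * 2 := by
        apply Finset.sum_le_card_nsmul
        intro x hx
        have hxC : x ∈ C := (Set.Finite.mem_toFinset _).mp (Finset.mem_of_mem_erase hx)
        rw [hdegFC x hxC]
        exact (hF x).1
      have hlast : G.degOn FC v₀ ≤ 1 := by rw [hdegFC v₀ hv₀C]; exact hv₀le
      have hcarderase : (C.toFinite.toFinset.erase v₀).card = C.ncard - 1 := by
        rw [Finset.card_erase_of_mem hv₀mem, ← Set.ncard_coe_finset, Set.Finite.coe_toFinset]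
      have hCpos : 0 < C.ncard := (Set.ncard_pos (Set.toFinite _)).mpr ⟨z, hzC⟩
      omega
    have hFClt : FC.ncard + 1 ≤ C.ncard := by
      have hCpos : 0 < C.ncard := (Set.ncard_pos (Set.toFinite _)).mpr ⟨z, hzC⟩
      omega
    have hge := card_le_of_conn FC.ncard FC C le_rfl ⟨z, hzC⟩ hFCin hFCconn
    have htreeC : G.IsTree C FC := ⟨⟨z, hzC⟩, hFCin, hFCconn, by omega⟩
    obtain ⟨d, hdz, hdp⟩ := tree_coloring FC.ncard FC C le_rfl htreeC z hzC false
    refine master_extension hF hwU htree hgood hc hcw hwe hmax he' hy0 hy0c hz htreeC hdz hdp ?_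
    intro x hxC _ hxleaf hxdeg
    exfalso
    have h1 : G.degOn F x = 1 := by rw [← hdegFC x hxC]; exact hxleaf
    have hlt := (hF x).2 (by omega)
    exact absurd hxdeg (Nat.ne_of_lt hlt)
  have hdegs : ∀ v ∈ C, G.degOn FC v = 2 := fun v hv => (hdegFC v hv).trans (hdeg2 v hv)
  -- |FC| = |C|
  have hFCcard : FC.ncard = C.ncard := by
    have hhs := handshake (G := G) C FC hFCin
    have hsum2 : ∑ v ∈ C.toFinite.toFinset, G.degOn FC v = C.ncard * 2 := by
      rw [Finset.sum_congr rfl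
        (fun v hv => hdegs v ((Set.Finite.mem_toFinset _).mp hv)), Finset.sum_const,
        smul_eq_mul, ← Set.ncard_coe_finset, Set.Finite.coe_toFinset]
    omega
  -- deleting one edge of FC leaves a tree on C
  have hDel : ∀ f₀ ∈ FC, G.IsTree C (FC \ {f₀}) := fun f₀ hf₀ =>
    cycle_delete_edge hFCin hdegs hFCconn hFCcard hf₀
  -- leaves of such trees lie on the deleted edge
  have hleafchar : ∀ f₀ ∈ FC, ∀ x ∈ C, G.IsLeaf (FC \ {f₀}) x → x ∈ G.inc f₀ := by
    intro f₀ hf₀ x hxC hxleaf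
    by_contra hxf
    have heq : {g | g ∈ FC \ {f₀} ∧ x ∈ G.inc g} = {g | g ∈ FC ∧ x ∈ G.inc g} := by
      ext g
      simp only [Set.mem_setOf_eq, Set.mem_diff, Set.mem_singleton_iff]
      exact ⟨fun h => ⟨h.1.1, h.2⟩, fun h => ⟨⟨h.1, fun hh => hxf (hh ▸ h.2)⟩, h.2⟩⟩
    have h1 : G.degOn (FC \ {f₀}) x = 1 := hxleaf
    have h2 : G.degOn (FC \ {f₀}) x = G.degOn FC x := by
      unfold Multigraph.degOn
      rw [heq]
    rw [h2, hdegs x hxC] at h1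
    omega
  -- Part 2 : existence of the bipartition
  refine ⟨hdeg2, ?_, ?_⟩
  · -- existence of a proper colouring with z of colour false
    obtain ⟨f₀, hf₀FC, hzf₀⟩ := exists_edge_of_degOn_pos (G := G) (S := FC) (v := z)
      (by rw [hdegs z hzC]; omega)
    obtain ⟨z', hf₀inc, hz'z⟩ := exists_other hzf₀
    have htreeP := hDel f₀ hf₀FC
    obtain ⟨d, hdz, hdp⟩ := tree_coloring (FC \ {f₀}).ncard (FC \ {f₀}) C le_rfl htreeP
      z hzC false
    by_cases hdz' : d z' = false
    · -- parity failure: the tree extension contradicts maximality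
      exfalso
      refine master_extension hF hwU htree hgood hc hcw hwe hmax he' hy0 hy0c hz htreeP
        hdz hdp ?_
      intro x hxC hxz hxleaf _
      have hxf₀ : x ∈ G.inc f₀ := hleafchar f₀ hf₀FC x hxC hxleaf
      rw [hf₀inc, Sym2.mem_iff] at hxf₀
      rcases hxf₀ with rfl | rfl
      · exact absurd rfl hxz
      · exact hdz'
    · -- the colouring is proper on all of FC
      have hdz'' : d z' = true := by
        cases h : d z' with
        | false => exact absurd h hdz'
        | true => rfl
      refine ⟨d, hdz, ?_⟩
      intro e heF u v huv huC
      have heFC : e ∈ FC := ⟨heF, u, by rw [huv]; simp, huC⟩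
      rcases eq_or_ne e f₀ with rfl | hef
      · have : s(z, z') = s(u, v) := by rw [← hf₀inc, huv]
        rcases Sym2.eq_iff.mp this with ⟨h1, h2⟩ | ⟨h1, h2⟩
        · intro hEq; rw [← h1, ← h2, hdz, hdz''] at hEq; simp at hEq
        · intro hEq; rw [← h1, ← h2, hdz, hdz''] at hEq; simp at hEq
      · exact hdp e ⟨heFC, hef⟩ u v huv
  · -- Part 3
    intro d hdz hdp
    have hdFC : ∀ e ∈ FC, ∀ u v : V, G.inc e = s(u, v) → d u ≠ d v := by
      intro e he u v huv
      obtain ⟨a, ha, haC⟩ := he.2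
      have hauv : a = u ∨ a = v := by rw [huv, Sym2.mem_iff] at ha; exact ha
      rcases hauv with rfl | rfl
      · exact hdp e he.1 a v huv haC
      · exact fun h => hdp e he.1 a u (huv.trans Sym2.eq_swap) haC h.symm
    constructor
    · -- every vertex of Y has maximum degree
      intro v hvC hdv
      by_contra hne'
      obtain ⟨f₀, hf₀FC, hvf₀⟩ := exists_edge_of_degOn_pos (G := G) (S := FC) (v := v)
        (by rw [hdegs v hvC]; omega)
      obtain ⟨v', hf₀inc, hv'v⟩ := exists_other hvf₀
      have htreeP := hDel f₀ hf₀FC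
      have hdP : G.ProperOn (FC \ {f₀}) d := fun e he p q hpq => hdFC e he.1 p q hpq
      refine master_extension hF hwU htree hgood hc hcw hwe hmax he' hy0 hy0c hz htreeP
        hdz hdP ?_
      intro x hxC hxz hxleaf hxdeg
      have hxf₀ : x ∈ G.inc f₀ := hleafchar f₀ hf₀FC x hxC hxleaf
      rw [hf₀inc, Sym2.mem_iff] at hxf₀
      rcases hxf₀ with rfl | rfl
      · exact absurd hxdeg hne'
      · have hne2 := hdFC f₀ hf₀FC v x hf₀inc
        rw [hdv] at hne2
        cases h : d x with
        | false => rfl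
        | true => exact absurd h.symm hne2
    · -- no edge joins two vertices of Y
      intro e u v huv huC hdu hvC hdv
      have huvne : u ≠ v := inc_ne huv
      set Du : Set E := {g | g ∈ FC ∧ u ∈ G.inc g} with hDudef
      have hDu2 : Du.ncard = 2 := hdegs u huC
      obtain ⟨f₁, f₂, hf12, hDu⟩ := Set.ncard_eq_two.mp hDu2
      have hf₁Du : f₁ ∈ Du := by rw [hDu]; simp
      have hf₂Du : f₂ ∈ Du := by rw [hDu]; simp
      obtain ⟨a, hf₁inc, hau⟩ := exists_other hf₁Du.2
      obtain ⟨b, hf₂inc, hbu⟩ := exists_other hf₂Du.2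
      have haC : a ∈ C := hFCin f₁ hf₁Du.1 a (by rw [hf₁inc]; simp)
      have hbC : b ∈ C := hFCin f₂ hf₂Du.1 b (by rw [hf₂inc]; simp)
      have hda : d a = false := by
        have hne2 := hdFC f₁ hf₁Du.1 u a hf₁inc
        rw [hdu] at hne2
        cases h : d a with
        | false => rfl
        | true => exact absurd rfl (h ▸ hne2)
      have hdb : d b = false := by
        have hne2 := hdFC f₂ hf₂Du.1 u b hf₂inc
        rw [hdu] at hne2
        cases h : d b with
        | false => rfl
        | true => exact absurd rfl (h ▸ hne2)
      have htreeV := cycle_delete_vertex hFCin hdegs hFCconn hFCcard huC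
      have heDu : e ∉ FC \ Du := by
        rintro ⟨h1, h2⟩
        exact h2 ⟨h1, by rw [huv]; simp⟩
      have hins : insert u (C \ {u}) = C := by
        rw [Set.insert_diff_singleton]
        exact Set.insert_eq_self.mpr huC
      have htreeP : G.IsTree C (insert e (FC \ Du)) := by
        rw [← hins]
        exact tree_attach htreeV (by simp) heDu huv ⟨hvC, fun h => huvne (Set.mem_singleton_iff.mp h).symm⟩
      set d' : V → Bool := fun x => if x = u then false else d x with hd'def
      have hzu : z ≠ u := by
        intro h
        rw [h, hdu] at hdz
        simp at hdz
      have hd'z : d' z = false := by rw [hd'def]; simp only [if_neg hzu]; exact hdz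
      have hd'P : G.ProperOn (insert e (FC \ Du)) d' := by
        rintro g (rfl | hg) p q hpq
        · have : s(u, v) = s(p, q) := by rw [← huv, hpq]
          rcases Sym2.eq_iff.mp this with ⟨h1, h2⟩ | ⟨h1, h2⟩
          · rw [hd'def]
            simp only [← h1, ← h2, if_pos rfl, if_neg (fun h : v = u => huvne h.symm)]
            rw [hdv]; simp
          · rw [hd'def]
            simp only [← h1, ← h2, if_pos rfl, if_neg (fun h : v = u => huvne h.symm)]
            rw [hdv]; simp
        · have hpu : p ≠ u := by
            rintro rfl
            exact hg.2 ⟨hg.1, by rw [hpq]; simp⟩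
          have hqu : q ≠ u := by
            rintro rfl
            exact hg.2 ⟨hg.1, by rw [hpq, Sym2.mem_iff]; exact Or.inr rfl⟩
          rw [hd'def]
          simp only [if_neg hpu, if_neg hqu]
          exact hdFC g hg.1 p q hpq
      refine master_extension hF hwU htree hgood hc hcw hwe hmax he' hy0 hy0c hz htreeP
        hd'z hd'P ?_
      intro x hxC hxz hxleaf _
      rcases eq_or_ne x u with rfl | hxu
      · rw [hd'def]; simp
      · -- x must be a or b
        have hxab : x = a ∨ x = b := by
          by_contra hxab
          push_neg at hxab
          have hnotf₁ : x ∉ G.inc f₁ := by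
            rw [hf₁inc, Sym2.mem_iff]
            rintro (rfl | rfl)
            · exact hxu rfl
            · exact hxab.1 rfl
          have hnotf₂ : x ∉ G.inc f₂ := by
            rw [hf₂inc, Sym2.mem_iff]
            rintro (rfl | rfl)
            · exact hxu rfl
            · exact hxab.2 rfl
          have heq : {g | g ∈ FC \ Du ∧ x ∈ G.inc g} = {g | g ∈ FC ∧ x ∈ G.inc g} := by
            ext g
            simp only [Set.mem_setOf_eq, Set.mem_diff]
            refine ⟨fun h => ⟨h.1.1, h.2⟩, fun h => ⟨⟨h.1, fun hg => ?_⟩, h.2⟩⟩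
            have : g = f₁ ∨ g = f₂ := by rw [hDu] at hg; exact hg
            rcases this with rfl | rfl
            · exact hnotf₁ h.2
            · exact hnotf₂ h.2
          have h2 : G.degOn (FC \ Du) x = 2 := by
            unfold Multigraph.degOn
            rw [heq]
            exact hdegs x hxC
          have hxe : x ∉ G.inc e := by
            rw [huv, Sym2.mem_iff]
            rintro (rfl | rfl)
            · exact hxu rfl
            · -- x = v : then degOn (insert e ...) x = 3
              have h1 : G.IsLeaf (insert e (FC \ Du)) x := hxleaf
              have h3 : G.degOn (insert e (FC \ Du)) x =
                  G.degOn {e} x + G.degOn (FC \ Du) x := by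
                rw [Set.insert_eq, degOn_union (by
                  rw [Set.disjoint_left]; rintro g rfl; exact heDu)]
              have h4 : G.degOn {e} x = 1 := by
                rw [degOn_singleton, if_pos (by rw [huv, Sym2.mem_iff]; exact Or.inr rfl)]
              have h5 : G.degOn (insert e (FC \ Du)) x = 1 := h1
              omega
          have h3 : G.degOn (insert e (FC \ Du)) x =
              G.degOn {e} x + G.degOn (FC \ Du) x := by
            rw [Set.insert_eq, degOn_union (by
              rw [Set.disjoint_left]; rintro g rfl; exact heDu)]
          have h4 : G.degOn {e} x = 0 := by rw [degOn_singleton, if_neg hxe]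
          have h5 : G.degOn (insert e (FC \ Du)) x = 1 := hxleaf
          omega
        rw [hd'def]
        simp only [if_neg hxu]
        rcases hxab with rfl | rfl
        · exact hda
        · exact hdb
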